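/- The function h(x) = x exp(x²/2) Φ(x) is strictly increasing on ℝ, i.e., h'(x) = (1+x²) exp(x²/2) Φ(x) + x/√(2π) > 0 for all x. -/

import Mathlib

open Real MeasureTheory Set Filter

noncomputable def Phi (x : ℝ) : ℝ :=
  (Real.sqrt (2 * Real.pi))⁻¹ * ∫ y in Set.Iic x, Real.exp (-y ^ 2 / 2)

lemma gauss_eq (y : ℝ) : Real.exp (-y ^ 2 / 2) = Real.exp (-(2⁻¹ : ℝ) * y ^ 2) := by
  ring_nf

lemma gauss_integrable : Integrable (fun y : ℝ => Real.exp (-y ^ 2 / 2)) := by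
  simp only [gauss_eq]
  exact integrable_exp_neg_mul_sq (by norm_num)

lemma gauss_cont : Continuous (fun y : ℝ => Real.exp (-y ^ 2 / 2)) := by
  continuity

lemma int_pos (x : ℝ) : 0 < ∫ y in Set.Iic x, Real.exp (-y ^ 2 / 2) := by
  rw [setIntegral_pos_iff_support_of_nonneg_ae]
  · have : Function.support (fun y : ℝ => Real.exp (-y ^ 2 / 2)) = Set.univ := by
      ext y; simp [Real.exp_ne_zero]
    rw [this]
    simp
  · filter_upwards with y using (Real.exp_pos _).le
  · exact gauss_integrable.integrableOn

lemma Phi_pos (x : ℝ) : 0 < Phi x := by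
  have h2π : 0 < Real.sqrt (2 * Real.pi) := Real.sqrt_pos.2 (by positivity)
  exact mul_pos (inv_pos.2 h2π) (int_pos x)

lemma hasDerivAt_Phi (x : ℝ) :
    HasDerivAt Phi ((Real.sqrt (2 * Real.pi))⁻¹ * Real.exp (-x ^ 2 / 2)) x := by
  have key : ∀ u : ℝ, Phi u = (Real.sqrt (2 * Real.pi))⁻¹ *
      ((∫ y in Set.Iic (0:ℝ), Real.exp (-y ^ 2 / 2)) +
        ∫ y in (0:ℝ)..u, Real.exp (-y ^ 2 / 2)) := by
    intro u
    unfold Phi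
    congr 1
    have := intervalIntegral.integral_Iic_sub_Iic (gauss_integrable.integrableOn (s := Set.Iic 0))
      (gauss_integrable.integrableOn (s := Set.Iic u))
    linarith [this]
  have hd : HasDerivAt (fun u => ∫ y in (0:ℝ)..u, Real.exp (-y ^ 2 / 2))
      (Real.exp (-x ^ 2 / 2)) x :=
    intervalIntegral.integral_hasDerivAt_right
      gauss_integrable.intervalIntegrable
      (gauss_cont.stronglyMeasurableAtFilter _ _) gauss_cont.continuousAt
  have hD := ((hd.const_add ((∫ y in Set.Iic (0:ℝ), Real.exp (-y ^ 2 / 2)))).const_mul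
    ((Real.sqrt (2 * Real.pi))⁻¹))
  exact hD.congr_of_eventuallyEq (Filter.Eventually.of_forall key)

noncomputable def G (y : ℝ) : ℝ := -y / (1 + y ^ 2) * Real.exp (-y ^ 2 / 2)

lemma hasDerivAt_G (y : ℝ) :
    HasDerivAt G (Real.exp (-y ^ 2 / 2) * (1 - 2 / (1 + y ^ 2) ^ 2)) y := by
  have h1 : (1 : ℝ) + y ^ 2 ≠ 0 := by positivity
  have hu : HasDerivAt (fun y : ℝ => -y / (1 + y ^ 2))
      ((y ^ 2 - 1) / (1 + y ^ 2) ^ 2) y := by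
    have := (hasDerivAt_id y).neg.div ((hasDerivAt_pow 2 y).const_add 1) h1
    refine this.congr_deriv ?_
    simp only [Pi.neg_apply, id_eq]
    field_simp
    ring
  have hv : HasDerivAt (fun y : ℝ => Real.exp (-y ^ 2 / 2))
      (-y * Real.exp (-y ^ 2 / 2)) y := by
    have h2 : HasDerivAt (fun y : ℝ => -y ^ 2 / 2) (-y) y := by
      have := ((hasDerivAt_pow 2 y).neg.div_const 2)
      refine this.congr_deriv ?_
      push_cast
      ring
    simpa [mul_comm] using h2.exp
  have := hu.mul hv
  refine this.congr_deriv ?_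
  field_simp
  ring

lemma gprime_le (y : ℝ) :
    Real.exp (-y ^ 2 / 2) * (1 - 2 / (1 + y ^ 2) ^ 2) ≤ Real.exp (-y ^ 2 / 2) := by
  have h1 : (0:ℝ) < (1 + y ^ 2) ^ 2 := by positivity
  nlinarith [Real.exp_pos (-y ^ 2 / 2), div_pos (by norm_num : (0:ℝ) < 2) h1]

lemma gprime_integrable (x : ℝ) :
    IntegrableOn (fun y => Real.exp (-y ^ 2 / 2) * (1 - 2 / (1 + y ^ 2) ^ 2)) (Set.Iic x) := by
  apply Integrable.mono (gauss_integrable.integrableOn (s := Set.Iic x))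
  · apply Continuous.aestronglyMeasurable
    apply gauss_cont.mul
    apply Continuous.sub continuous_const
    apply Continuous.div continuous_const (by continuity)
    intro y; positivity
  · filter_upwards with y
    have h1 : (0:ℝ) < (1 + y ^ 2) ^ 2 := by positivity
    have h2 : (2:ℝ) / (1 + y ^ 2) ^ 2 ≤ 2 := by
      rw [div_le_iff₀ h1]; nlinarith
    have h3 : (0:ℝ) < 2 / (1 + y ^ 2) ^ 2 := by positivity
    rw [Real.norm_eq_abs, Real.norm_eq_abs, abs_mul, abs_of_pos (Real.exp_pos _)]
    have habs : |1 - 2 / (1 + y ^ 2) ^ 2| ≤ 1 := by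
      rw [abs_le]; constructor <;> linarith
    calc Real.exp (-y ^ 2 / 2) * |1 - 2 / (1 + y ^ 2) ^ 2|
        ≤ Real.exp (-y ^ 2 / 2) := mul_le_of_le_one_right (Real.exp_pos _).le habs

lemma G_tendsto : Tendsto G atBot (nhds 0) := by
  have hb : ∀ y : ℝ, |G y| ≤ Real.exp (-y ^ 2 / 2) := by
    intro y
    unfold G
    rw [abs_mul, abs_of_pos (Real.exp_pos _)]
    have h1 : (0:ℝ) < 1 + y ^ 2 := by positivity
    have habs : |-y / (1 + y ^ 2)| ≤ 1 := by
      rw [abs_div, abs_of_pos h1, div_le_one h1, abs_neg]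
      nlinarith [abs_nonneg y, sq_abs y]
    exact mul_le_of_le_one_left (Real.exp_pos _).le habs
  have hsq : Tendsto (fun y : ℝ => y ^ 2) atBot atTop := by
    have h : Tendsto (fun y : ℝ => -y) atBot atTop := tendsto_neg_atBot_atTop
    have := (tendsto_pow_atTop (n := 2) (by norm_num)).comp h
    simpa [Function.comp_def, neg_sq] using this
  have h1 : Tendsto (fun y : ℝ => -y ^ 2 / 2) atBot atBot :=
    (tendsto_neg_atTop_atBot.comp hsq).atBot_div_const two_pos
  have hexp : Tendsto (fun y : ℝ => Real.exp (-y ^ 2 / 2)) atBot (nhds 0) :=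
    Real.tendsto_exp_atBot.comp h1
  apply squeeze_zero_norm hb hexp

lemma mills (x : ℝ) : G x < ∫ y in Set.Iic x, Real.exp (-y ^ 2 / 2) := by
  have hftc : ∫ y in Set.Iic x, Real.exp (-y ^ 2 / 2) * (1 - 2 / (1 + y ^ 2) ^ 2)
      = G x - 0 :=
    MeasureTheory.integral_Iic_of_hasDerivAt_of_tendsto'
      (fun y _ => hasDerivAt_G y) (gprime_integrable x) G_tendsto
  rw [sub_zero] at hftc
  have hdiff : 0 < ∫ y in Set.Iic x,
      (Real.exp (-y ^ 2 / 2) - Real.exp (-y ^ 2 / 2) * (1 - 2 / (1 + y ^ 2) ^ 2)) := by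
    rw [setIntegral_pos_iff_support_of_nonneg_ae]
    · have hsupp : Function.support (fun y : ℝ =>
          Real.exp (-y ^ 2 / 2) - Real.exp (-y ^ 2 / 2) * (1 - 2 / (1 + y ^ 2) ^ 2)) = Set.univ := by
        ext y
        simp only [Function.mem_support, Set.mem_univ, iff_true]
        have h1 : (0:ℝ) < (1 + y ^ 2) ^ 2 := by positivity
        have : Real.exp (-y ^ 2 / 2) - Real.exp (-y ^ 2 / 2) * (1 - 2 / (1 + y ^ 2) ^ 2)
            = Real.exp (-y ^ 2 / 2) * (2 / (1 + y ^ 2) ^ 2) := by ring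
        rw [this]
        positivity
      rw [hsupp]
      simp
    · filter_upwards with y using sub_nonneg.2 (gprime_le y)
    · exact (gauss_integrable.integrableOn).sub (gprime_integrable x)
  rw [MeasureTheory.integral_sub gauss_integrable.integrableOn (gprime_integrable x), hftc] at hdiff
  linarith

/-- The function `h(x) = x exp(x²/2) Φ(x)` is strictly increasing: its derivative
`h'(x) = (1+x²) exp(x²/2) Φ(x) + x/√(2π)` is positive for all `x`. -/
theorem h_strictMono :
    StrictMono (fun x : ℝ => x * Real.exp (x ^ 2 / 2) * Phi x) ∧
    ∀ x : ℝ,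
      HasDerivAt (fun x : ℝ => x * Real.exp (x ^ 2 / 2) * Phi x)
        ((1 + x ^ 2) * Real.exp (x ^ 2 / 2) * Phi x + x / Real.sqrt (2 * Real.pi)) x ∧
      0 < (1 + x ^ 2) * Real.exp (x ^ 2 / 2) * Phi x + x / Real.sqrt (2 * Real.pi) := by
  have h2π : 0 < Real.sqrt (2 * Real.pi) := Real.sqrt_pos.2 (by positivity)
  have hderiv : ∀ x : ℝ,
      HasDerivAt (fun x : ℝ => x * Real.exp (x ^ 2 / 2) * Phi x)
        ((1 + x ^ 2) * Real.exp (x ^ 2 / 2) * Phi x + x / Real.sqrt (2 * Real.pi)) x := by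
    intro x
    have he : HasDerivAt (fun x : ℝ => Real.exp (x ^ 2 / 2)) (x * Real.exp (x ^ 2 / 2)) x := by
      have h2 : HasDerivAt (fun x : ℝ => x ^ 2 / 2) x x := by
        simpa using ((hasDerivAt_pow 2 x).div_const 2)
      simpa [mul_comm] using h2.exp
    have := ((hasDerivAt_id x).mul he).mul (hasDerivAt_Phi x)
    refine this.congr_deriv ?_
    have hee : Real.exp (x ^ 2 / 2) * Real.exp (-x ^ 2 / 2) = 1 := by
      rw [← Real.exp_add]; ring_nf; exact Real.exp_zero
    simp only [id_eq, Pi.mul_apply]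
    have h2 : x * Real.exp (x ^ 2 / 2) * ((Real.sqrt (2 * Real.pi))⁻¹ * Real.exp (-x ^ 2 / 2))
        = x * (Real.sqrt (2 * Real.pi))⁻¹ := by
      calc x * Real.exp (x ^ 2 / 2) * ((Real.sqrt (2 * Real.pi))⁻¹ * Real.exp (-x ^ 2 / 2))
          = x * (Real.sqrt (2 * Real.pi))⁻¹ *
            (Real.exp (x ^ 2 / 2) * Real.exp (-x ^ 2 / 2)) := by ring
        _ = x * (Real.sqrt (2 * Real.pi))⁻¹ := by rw [hee, mul_one]
    rw [h2, div_eq_mul_inv]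
    ring
  have hpos : ∀ x : ℝ,
      0 < (1 + x ^ 2) * Real.exp (x ^ 2 / 2) * Phi x + x / Real.sqrt (2 * Real.pi) := by
    intro x
    rcases le_or_gt 0 x with hx | hx
    · have := Phi_pos x
      have h1 : 0 < (1 + x ^ 2) * Real.exp (x ^ 2 / 2) * Phi x := by positivity
      have h2 : 0 ≤ x / Real.sqrt (2 * Real.pi) := by positivity
      linarith
    · have hm := mills x
      have key : (1 + x ^ 2) * Real.exp (x ^ 2 / 2) * Phi x >
          -x / Real.sqrt (2 * Real.pi) := by
        unfold Phi
        have hG : (1 + x ^ 2) * Real.exp (x ^ 2 / 2) *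
            ((Real.sqrt (2 * Real.pi))⁻¹ * G x) = -x / Real.sqrt (2 * Real.pi) := by
          unfold G
          have hee : Real.exp (x ^ 2 / 2) * Real.exp (-x ^ 2 / 2) = 1 := by
            rw [← Real.exp_add]; ring_nf; exact Real.exp_zero
          have h1 : (1:ℝ) + x ^ 2 ≠ 0 := by positivity
          have hxx : -x / (1 + x ^ 2) * (1 + x ^ 2) = -x := div_mul_cancel₀ _ h1
          calc (1 + x ^ 2) * Real.exp (x ^ 2 / 2) *
              ((Real.sqrt (2 * Real.pi))⁻¹ * (-x / (1 + x ^ 2) * Real.exp (-x ^ 2 / 2)))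
              = (-x / (1 + x ^ 2) * (1 + x ^ 2)) *
                (Real.exp (x ^ 2 / 2) * Real.exp (-x ^ 2 / 2)) *
                (Real.sqrt (2 * Real.pi))⁻¹ := by ring
            _ = -x * (Real.sqrt (2 * Real.pi))⁻¹ := by rw [hxx, hee]; ring
            _ = -x / Real.sqrt (2 * Real.pi) := (div_eq_mul_inv _ _).symm
        rw [← hG]
        have h1 : 0 < (1 + x ^ 2) * Real.exp (x ^ 2 / 2) := by positivity
        apply mul_lt_mul_of_pos_left _ h1
        exact mul_lt_mul_of_pos_left hm (inv_pos.2 h2π)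
      rw [neg_div] at key
      linarith [key]
  refine ⟨?_, fun x => ⟨hderiv x, hpos x⟩⟩
  apply strictMono_of_deriv_pos
  intro x
  rw [(hderiv x).deriv]
  exact hpos x
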